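/- Let C be a commutative Picard category (a symmetric monoidal groupoid in which tensoring with any fixed object is an equivalence). Then C has a unit object 0 with 0 + X ≅ X for every X, and every object X admits an inverse −X with X + (−X) ≅ 0. -/

import Mathlib

/-!
STATEMENT 9: a commutative Picard category (a groupoid with a bifunctor `+`, coherent
associativity and commutativity isomorphisms, such that adding any fixed object on either
side is an equivalence) has a unit object `0` with `0 + X ≅ X` for all `X`, and every
object has an inverse.
-/

open CategoryTheory

universe v u

/-- The data of a commutative Picard category structure on a groupoid `C`. -/
structure CommPicardStruct (C : Type u) [Groupoid.{v} C] where
  /-- The addition bifunctor. -/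
  F : C × C ⥤ C
  /-- The associativity isomorphism `(x + y) + z ≅ x + (y + z)`, natural in all variables. -/
  assoc : F.prod (𝟭 C) ⋙ F ≅ prod.associator C C C ⋙ (𝟭 C).prod F ⋙ F
  /-- The commutativity isomorphism `x + y ≅ y + x`, natural in both variables. -/
  comm : F ≅ CategoryTheory.Prod.swap C C ⋙ F
  /-- The pentagon coherence constraint. -/
  pentagon : ∀ w x y z : C,
    assoc.hom.app ((F.obj (w, x), y), z) ≫ assoc.hom.app ((w, x), F.obj (y, z)) =
      F.map (assoc.hom.app ((w, x), y), 𝟙 z) ≫ assoc.hom.app ((w, F.obj (x, y)), z) ≫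
        F.map (CategoryTheory.Prod.mkHom (𝟙 w) (assoc.hom.app ((x, y), z)))
  /-- The hexagon coherence constraint. -/
  hexagon : ∀ x y z : C,
    assoc.hom.app ((x, y), z) ≫ comm.hom.app (x, F.obj (y, z)) ≫
        assoc.hom.app ((y, z), x) =
      F.map (comm.hom.app (x, y), 𝟙 z) ≫ assoc.hom.app ((y, x), z) ≫
        F.map (CategoryTheory.Prod.mkHom (𝟙 y) (comm.hom.app (x, z)))
  /-- The commutativity constraint is symmetric. -/
  symm : ∀ x y : C, comm.hom.app (x, y) ≫ comm.hom.app (y, x) = 𝟙 (F.obj (x, y))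
  /-- For every `P`, the functor `X ↦ P + X` is an equivalence. -/
  equivL : ∀ P : C, ((Functor.curry.obj F).obj P).IsEquivalence
  /-- For every `P`, the functor `X ↦ X + P` is an equivalence. -/
  equivR : ∀ P : C, ((Functor.curry.obj (CategoryTheory.Prod.swap C C ⋙ F)).obj P).IsEquivalence

theorem commPicard_has_unit_and_inverses (C : Type u) [Groupoid.{v} C] [Nonempty C]
    (D : CommPicardStruct C) :
    ∃ Z : C, (∀ X : C, Nonempty (D.F.obj (Z, X) ≅ X)) ∧
      ∀ X : C, ∃ Y : C, Nonempty (D.F.obj (X, Y) ≅ Z) := by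
  obtain ⟨E⟩ := ‹Nonempty C›
  let L := (Functor.curry.obj D.F).obj E
  haveI : L.IsEquivalence := D.equivL E
  -- choose Z with E + Z ≅ E
  let Z := L.objPreimage E
  let e : D.F.obj (E, Z) ≅ E := L.objObjPreimageIso E
  refine ⟨Z, fun X => ?_, fun X => ?_⟩
  · -- E + (Z + X) ⟶ E + X, then cancel E
    have h : L.obj (D.F.obj (Z, X)) ⟶ L.obj X :=
      D.assoc.inv.app ((E, Z), X) ≫ D.F.map ((e.hom, 𝟙 X) : (D.F.obj (E, Z), X) ⟶ (E, X))
    exact ⟨asIso (L.preimage h)⟩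
  · let K := (Functor.curry.obj D.F).obj X
    haveI : K.IsEquivalence := D.equivL X
    exact ⟨K.objPreimage Z, ⟨K.objObjPreimageIso Z⟩⟩
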